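/- If G is a tree and (G, S) is internally connected and shattered, then for every edge (u,v) on the unique path from s to t in G, d(v,t) < d(u,t); consequently greedy category-based routing correctly routes messages between every pair of vertices. -/

import Mathlib

open Finset SimpleGraph

variable {V : Type*}

/-- The set of categories that `x` belongs to. -/
def cat [DecidableEq V] (S : Finset (Finset V)) (x : V) : Finset (Finset V) :=
  S.filter (fun C => x ∈ C)

/-- The category-based distance `d(s,t) = |cat(t) \ cat(s)|`. -/
def dd [DecidableEq V] (S : Finset (Finset V)) (s t : V) : ℕ :=
  (cat S t \ cat S s).card

/-- `(G, S)` is shattered. -/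
def Shattered [DecidableEq V] (G : SimpleGraph V) (S : Finset (Finset V)) : Prop :=
  ∀ s t : V, s ≠ t → ∃ u, G.Adj s u ∧ ∃ C ∈ S, u ∈ C ∧ t ∈ C ∧ s ∉ C

/-- `(G, S)` is internally connected: every category induces a connected subgraph. -/
def InternallyConnected (G : SimpleGraph V) (S : Finset (Finset V)) : Prop :=
  ∀ C ∈ S, (G.induce (C : Set V)).Preconnected

/-- Greedy routing can reach `t` from `s`: there is a path along which the
category distance to `t` strictly decreases at every step. -/
def RoutesTo [DecidableEq V] (G : SimpleGraph V) (S : Finset (Finset V)) (s t : V) : Prop :=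
  Relation.ReflTransGen (fun a b => G.Adj a b ∧ dd S b t < dd S a t) s t

/-- Greedy routing works between all pairs of vertices. -/
def RoutingWorks [DecidableEq V] (G : SimpleGraph V) (S : Finset (Finset V)) : Prop :=
  ∀ s t : V, s ≠ t → RoutesTo G S s t

/-- The membership dimension of a category system. -/
def memdim [DecidableEq V] [Fintype V] (S : Finset (Finset V)) : ℕ :=
  Finset.univ.sup fun u => (cat S u).card

/-- If `G` is a tree and `(G, S)` is internally connected and shattered,
then along every (unique) path the category distance to the target strictly decreases
across each edge; consequently greedy routing works between every pair of vertices. -/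
lemma exists_walk_in {G : SimpleGraph V} {S : Finset (Finset V)}
    (hIC : InternallyConnected G S) {C : Finset V} (hC : C ∈ S) {u t : V}
    (hu : u ∈ C) (ht : t ∈ C) : ∃ W : G.Walk u t, ∀ x ∈ W.support, x ∈ C := by
  obtain ⟨W₀⟩ := hIC C hC ⟨u, hu⟩ ⟨t, ht⟩
  refine ⟨W₀.map (SimpleGraph.Embedding.induce (C : Set V)).toHom, ?_⟩
  intro x hx
  replace hx : x ∈ (W₀.map (SimpleGraph.Embedding.induce (C : Set V)).toHom).support := hx
  rw [SimpleGraph.Walk.support_map, List.mem_map] at hx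
  obtain ⟨a, _, rfl⟩ := hx
  exact a.2

lemma dart_decrease [DecidableEq V] {G : SimpleGraph V} {S : Finset (Finset V)}
    (hT : G.IsTree) (hIC : InternallyConnected G S) (hSh : Shattered G S)
    {u v t : V} (h : G.Adj u v) (q : G.Walk v t) (hp : (SimpleGraph.Walk.cons h q).IsPath) :
    dd S v t < dd S u t := by
  have hq := (SimpleGraph.Walk.cons_isPath_iff h q).mp hp
  have hut : u ≠ t := by
    intro he; subst he
    exact hq.2 q.end_mem_support
  have huniq := hT.existsUnique_path u t
  obtain ⟨p0, -, hun⟩ := huniq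
  have hsub : cat S t \ cat S v ⊆ cat S t \ cat S u := by
    intro C hCmem
    simp only [cat, Finset.mem_sdiff, Finset.mem_filter] at hCmem ⊢
    obtain ⟨⟨hCS, htC⟩, hnv⟩ := hCmem
    refine ⟨⟨hCS, htC⟩, fun hu2 => ?_⟩
    obtain ⟨W, hW⟩ := exists_walk_in hIC hCS hu2.2 htC
    have heq : W.bypass = SimpleGraph.Walk.cons h q := by
      rw [hun _ W.bypass_isPath, hun _ hp]
    have hvs : v ∈ W.bypass.support := by
      rw [heq]; simp
    exact hnv ⟨hCS, hW _ (W.support_bypass_subset hvs)⟩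
  obtain ⟨w, hadj, C, hCS, hwC, htC, hnuC⟩ := hSh u t hut
  obtain ⟨W, hW⟩ := exists_walk_in hIC hCS hwC htC
  have hu_not : u ∉ W.bypass.support := fun hx => hnuC (hW _ (W.support_bypass_subset hx))
  have hpath : (SimpleGraph.Walk.cons hadj W.bypass).IsPath :=
    (SimpleGraph.Walk.cons_isPath_iff _ _).mpr ⟨W.bypass_isPath, hu_not⟩
  have heq : SimpleGraph.Walk.cons hadj W.bypass = SimpleGraph.Walk.cons h q := by
    rw [hun _ hpath, hun _ hp]
  have hwv : w = v := by
    have := congrArg (fun W => SimpleGraph.Walk.getVert W 1) heq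
    simpa [SimpleGraph.Walk.getVert_cons_succ] using this
  subst hwv
  apply Finset.card_lt_card
  rw [Finset.ssubset_iff_of_subset hsub]
  refine ⟨C, ?_, ?_⟩ <;> simp only [cat, Finset.mem_sdiff, Finset.mem_filter]
  · exact ⟨⟨hCS, htC⟩, fun hc => hnuC hc.2⟩
  · intro hc; exact hc.2 ⟨hCS, hwC⟩

lemma routes_of_walk [DecidableEq V] {G : SimpleGraph V} {S : Finset (Finset V)} {s t : V}
    (p : G.Walk s t) (hd : ∀ e ∈ p.darts, dd S e.snd t < dd S e.fst t) :
    RoutesTo G S s t := by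
  induction p with
  | nil => exact Relation.ReflTransGen.refl
  | @cons a b c h q ih =>
    have h1 : dd S b c < dd S a c := hd ⟨(a, b), h⟩ (by rw [SimpleGraph.Walk.darts_cons]; exact List.mem_cons_self)
    have h2 : ∀ e ∈ q.darts, dd S e.snd c < dd S e.fst c :=
      fun e he => hd e (by rw [SimpleGraph.Walk.darts_cons]; exact List.mem_cons_of_mem _ he)
    exact Relation.ReflTransGen.head ⟨h, h1⟩ (ih h2)

theorem tree_routing_works [DecidableEq V] (G : SimpleGraph V) (S : Finset (Finset V))
    (hT : G.IsTree) (hIC : InternallyConnected G S) (hSh : Shattered G S) :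
    (∀ (s t : V) (p : G.Walk s t), p.IsPath →
      ∀ e ∈ p.darts, dd S e.snd t < dd S e.fst t) ∧
    RoutingWorks G S := by
  have main : ∀ (s t : V) (p : G.Walk s t), p.IsPath →
      ∀ e ∈ p.darts, dd S e.snd t < dd S e.fst t := by
    intro s t p
    induction p with
    | nil => intro _ e he; simp at he
    | cons h q ih =>
      intro hp e he
      rw [SimpleGraph.Walk.darts_cons, List.mem_cons] at he
      rcases he with rfl | he
      · exact dart_decrease hT hIC hSh h q hp
      · exact ih hp.of_cons e he
  refine ⟨main, fun s t hst => ?_⟩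
  obtain ⟨W⟩ := hT.isConnected.preconnected s t
  exact routes_of_walk W.bypass (main s t W.bypass W.bypass_isPath)
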